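/- Let (X, α) be a finite productive labelled transition system over a finite nonempty alphabet A, and equip A^ω := ℕ → A with the metric d(s, t) = (1/2)^n where n is the least index with s(n) ≠ t(n). Then the map x ↦ str(x), sending each state to its (nonempty compact) set of emitted streams, is the unique solution of (X, α) for the prepend interpretation: for every x ∈ X, str(x) = ⋃_{(a,y) ∈ α x} prepend_a '' str(y), and any function ψ from X to nonempty compact subsets of A^ω satisfying these equations equals str. -/

import Mathlib

open Filter Topology

/-- `IsTrace α x w` : the word `w` labels a path starting at `x` in the LTS `(X, α)`. -/
inductive IsTrace {X A : Type} (α : X → Set (A × X)) : X → List A → Prop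
  | nil (x : X) : IsTrace α x []
  | cons {x y : X} {a : A} {w : List A} :
      (a, y) ∈ α x → IsTrace α y w → IsTrace α x (a :: w)

/-- The trace set of a state `x`. -/
def tr {X A : Type} (α : X → Set (A × X)) (x : X) : Set (List A) :=
  {w | IsTrace α x w}

/-- The set of streams emitted by a state `x`. -/
def str {X A : Type} (α : X → Set (A × X)) (x : X) : Set (ℕ → A) :=
  {s | ∀ n : ℕ, (List.ofFn fun i : Fin n => s i.val) ∈ tr α x}

/-- The stream `a·s`. -/
def prepend {A : Type} (a : A) (s : ℕ → A) : ℕ → A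
  | 0 => a
  | n + 1 => s n

section Aux

variable {X A : Type} (α : X → Set (A × X))

lemma isTrace_mono : ∀ {m n : ℕ}, m ≤ n → ∀ (x : X) (s : ℕ → A),
    IsTrace α x (List.ofFn fun i : Fin n => s i.val) →
    IsTrace α x (List.ofFn fun i : Fin m => s i.val) := by
  intro m
  induction m with
  | zero => intro n _ x s _; simpa using IsTrace.nil x
  | succ m ih =>
    intro n hmn x s h
    cases n with
    | zero => omega
    | succ n =>
      rw [List.ofFn_succ] at h ⊢
      simp only [Fin.val_succ] at h ⊢
      cases h with
      | cons hmem htr =>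
        exact IsTrace.cons hmem (ih (by omega) _ (fun k => s (k + 1)) htr)

lemma str_eq (hfin : ∀ x, (α x).Finite) :
    ∀ x, str α x = ⋃ p ∈ α x, prepend p.1 '' str α p.2 := by
  intro x
  ext s
  constructor
  · intro hs
    have h1 : ∀ n : ℕ, ∃ y : X, (s 0, y) ∈ α x ∧
        IsTrace α y (List.ofFn fun i : Fin n => s (i.val + 1)) := by
      intro n
      have h := hs (n + 1)
      rw [List.ofFn_succ] at h
      simp only [Fin.val_succ] at h
      cases h with
      | cons hmem htr => exact ⟨_, hmem, htr⟩
    choose y hy1 hy2 using h1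
    haveI : Finite ↥(α x) := (hfin x).to_subtype
    obtain ⟨p, hp⟩ :=
      Finite.exists_infinite_fiber (fun n => (⟨(s 0, y n), hy1 n⟩ : ↥(α x)))
    have hpS : Set.Infinite ((fun n => (⟨(s 0, y n), hy1 n⟩ : ↥(α x))) ⁻¹' {p}) :=
      Set.infinite_coe_iff.mp hp
    obtain ⟨n0, hn0⟩ := hpS.nonempty
    have hkey : ∀ m : ℕ, IsTrace α (y n0) (List.ofFn fun i : Fin m => s (i.val + 1)) := by
      intro m
      obtain ⟨n, hn, hmn⟩ := hpS.exists_gt m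
      have hyy : y n = y n0 := by
        have h1 : (⟨(s 0, y n), hy1 n⟩ : ↥(α x)) = p := hn
        have h2 : (⟨(s 0, y n0), hy1 n0⟩ : ↥(α x)) = p := hn0
        have h3 := h1.trans h2.symm
        have := congrArg (fun q : ↥(α x) => (q : A × X).2) h3
        simpa using this
      have h4 := hy2 n
      rw [hyy] at h4
      exact isTrace_mono α (le_of_lt hmn) _ (fun k => s (k + 1)) h4
    refine Set.mem_biUnion (hy1 n0) ⟨fun i => s (i + 1), hkey, ?_⟩
    funext k
    cases k <;> rfl
  · intro hs
    simp only [Set.mem_iUnion, Set.mem_image] at hs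
    obtain ⟨p, hp, t, ht, rfl⟩ := hs
    intro n
    cases n with
    | zero => simpa [tr] using IsTrace.nil x
    | succ n =>
      rw [List.ofFn_succ]
      simp only [Fin.val_succ]
      exact IsTrace.cons hp (ht n)

lemma psi_sub_str (ψ : X → Set (ℕ → A))
    (hψeq : ∀ x, ψ x = ⋃ p ∈ α x, prepend p.1 '' ψ p.2) :
    ∀ (n : ℕ) (x : X) (s : ℕ → A), s ∈ ψ x →
      IsTrace α x (List.ofFn fun i : Fin n => s i.val) := by
  intro n
  induction n with
  | zero => intro x s _; simpa using IsTrace.nil x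
  | succ n ih =>
    intro x s hs
    rw [hψeq x] at hs
    simp only [Set.mem_iUnion, Set.mem_image] at hs
    obtain ⟨p, hp, t, ht, rfl⟩ := hs
    rw [List.ofFn_succ]
    simp only [Fin.val_succ]
    exact IsTrace.cons hp (ih p.2 t ht)

lemma approx (hfin : ∀ x, (α x).Finite) (ψ : X → Set (ℕ → A))
    (hψne : ∀ x, (ψ x).Nonempty)
    (hψeq : ∀ x, ψ x = ⋃ p ∈ α x, prepend p.1 '' ψ p.2) :
    ∀ (n : ℕ) (x : X) (s : ℕ → A), s ∈ str α x →
      ∃ u ∈ ψ x, ∀ i < n, u i = s i := by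
  intro n
  induction n with
  | zero =>
    intro x s _
    obtain ⟨u, hu⟩ := hψne x
    exact ⟨u, hu, fun i hi => by omega⟩
  | succ n ih =>
    intro x s hs
    rw [str_eq α hfin x] at hs
    simp only [Set.mem_iUnion, Set.mem_image] at hs
    obtain ⟨p, hp, t, ht, rfl⟩ := hs
    obtain ⟨u, hu, hagree⟩ := ih p.2 t ht
    refine ⟨prepend p.1 u, ?_, ?_⟩
    · rw [hψeq x]
      exact Set.mem_biUnion hp ⟨u, hu, rfl⟩
    · intro i hi
      cases i with
      | zero => rfl
      | succ j => exact hagree j (by omega)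

end Aux

theorem str_unique_solution_prepend {X A : Type} [Finite X] [Fintype A] [Nonempty A]
    [TopologicalSpace A] [DiscreteTopology A]
    (α : X → Set (A × X)) (hfin : ∀ x, (α x).Finite) (hprod : ∀ x, α x ≠ ∅) :
    (∀ x, str α x = ⋃ p ∈ α x, prepend p.1 '' str α p.2) ∧
    ∀ ψ : X → Set (ℕ → A),
      (∀ x, (ψ x).Nonempty ∧ IsCompact (ψ x)) →
      (∀ x, ψ x = ⋃ p ∈ α x, prepend p.1 '' ψ p.2) →
      ψ = fun x => str α x := by
  refine ⟨str_eq α hfin, ?_⟩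
  intro ψ hψ hψeq
  funext x
  apply Set.Subset.antisymm
  · intro s hs
    exact fun n => psi_sub_str α ψ hψeq n x s hs
  · intro s hs
    have happrox := fun n => approx α hfin ψ (fun z => (hψ z).1) hψeq n x s hs
    choose u hu hagree using happrox
    have htend : Tendsto u atTop (𝓝 s) := by
      rw [tendsto_pi_nhds]
      intro i
      have hev : (fun n => u n i) =ᶠ[atTop] fun _ => s i :=
        eventually_atTop.2 ⟨i + 1, fun n hn => hagree n i (by omega)⟩
      exact Tendsto.congr' hev.symm tendsto_const_nhds
    have hcl : s ∈ closure (ψ x) :=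
      mem_closure_of_tendsto htend (Filter.Eventually.of_forall hu)
    rwa [(hψ x).2.isClosed.closure_eq] at hcl
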